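/- Let Γ ↷ Y be an amenable action of a countable group on a countable set with infinite orbits, and let m ≥ 1. Then the diagonal action of Γ on the complement of the large diagonal in Y^m, namely on X = {(y_1,…,y_m) ∈ Y^m : y_i ≠ y_j for all i ≠ j}, is amenable. -/

import Mathlib

/-- `C` is a Følner sequence for the action of `G` on `X` given by `π`. -/
def IsFolnerSeq {G X : Type*} [Group G] (π : G →* Equiv.Perm X) (C : ℕ → Set X) : Prop :=
  (∀ n, (C n).Finite ∧ (C n).Nonempty) ∧
    ∀ g : G, Filter.Tendsto
      (fun n => ((symmDiff (C n) (π g '' C n)).ncard : ℝ) / (C n).ncard)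
      Filter.atTop (nhds 0)

/-- The action of `G` on `X` given by `π` is amenable (admits a Følner sequence). -/
def IsAmenableAction {G X : Type*} [Group G] (π : G →* Equiv.Perm X) : Prop :=
  ∃ C : ℕ → Set X, IsFolnerSeq π C

/-- The action given by `π` has infinite orbits. -/
def HasInfiniteOrbits {G X : Type*} [Group G] (π : G →* Equiv.Perm X) : Prop :=
  ∀ x : X, {y : X | ∃ g : G, π g x = y}.Infinite

/-- The action given by `π` is transitive. -/
def IsTransitiveAction {G X : Type*} [Group G] (π : G →* Equiv.Perm X) : Prop :=
  ∀ x y : X, ∃ g : G, π g x = y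

/-- The action given by `π` is almost free: every non-trivial element has finitely many
fixed points. -/
def IsAlmostFreeAction {G X : Type*} [Group G] (π : G →* Equiv.Perm X) : Prop :=
  ∀ g : G, g ≠ 1 → {x : X | π g x = x}.Finite

/-- The class 𝒜 of countable groups admitting a faithful, transitive and amenable action
on an infinite countable set. -/
def InClassA (G : Type*) [Group G] : Prop :=
  ∃ (X : Type) (_ : Countable X) (_ : Infinite X) (π : G →* Equiv.Perm X),
    Function.Injective π ∧ IsTransitiveAction π ∧ IsAmenableAction π

/-- The class 𝒜_ℱ of countable groups admitting an amenable, almost free action with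
infinite orbits on a countable set. -/
def InClassAF (G : Type*) [Group G] : Prop :=
  ∃ (X : Type) (_ : Countable X) (π : G →* Equiv.Perm X),
    IsAmenableAction π ∧ IsAlmostFreeAction π ∧ HasInfiniteOrbits π

/-- The diagonal permutation induced by `e` on the complement of the large diagonal in
`Y^m`, i.e. on the set of `m`-tuples with pairwise distinct coordinates. -/
def diagPerm {Y : Type*} (m : ℕ) (e : Equiv.Perm Y) :
    Equiv.Perm {v : Fin m → Y // ∀ i j, i ≠ j → v i ≠ v j} :=
  Equiv.subtypeEquiv ((Equiv.refl (Fin m)).arrowCongr e)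
    (fun v => by
      constructor
      · intro hv i j hij
        simpa [e.injective.ne_iff] using hv i j hij
      · intro hv i j hij
        have := hv i j hij
        simpa [e.injective.ne_iff] using this)

/-- The diagonal action of `Γ` on the complement of the large diagonal in `Y^m`. -/
def diagHom {Γ Y : Type*} [Group Γ] (π : Γ →* Equiv.Perm Y) (m : ℕ) :
    Γ →* Equiv.Perm {v : Fin m → Y // ∀ i j, i ≠ j → v i ≠ v j} where
  toFun g := diagPerm m (π g)
  map_one' := by
    ext v
    simp [diagPerm]
  map_mul' g h := by
    ext v
    simp [diagPerm]

open Filter Set Function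

private lemma folner_no_trapped {Γ Y : Type*} [Group Γ] (π : Γ →* Equiv.Perm Y)
    (hinf : HasInfiniteOrbits π) {C : ℕ → Set Y} (hC : IsFolnerSeq π C)
    {F : Set Y} (hF : F.Finite) (K : ℕ) (hall : ∀ k, K ≤ k → C k ⊆ F) : False := by
  have hIci : (Set.Ici K).Infinite := Set.Ici_infinite K
  obtain ⟨C0, hC0F, hJ⟩ : ∃ C0, C0 ⊆ F ∧ {k | K ≤ k ∧ C k = C0}.Infinite := by
    by_contra h
    push_neg at h
    have hsub : Set.Ici K ⊆ ⋃ S ∈ {b | b ⊆ F}, {k | K ≤ k ∧ C k = S} := by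
      intro k hk
      exact Set.mem_biUnion (hall k hk) ⟨hk, rfl⟩
    exact hIci (((hF.finite_subsets).biUnion fun S hS =>
      h S hS).subset hsub)
  have hfreq : ∃ᶠ k in atTop, K ≤ k ∧ C k = C0 := Nat.frequently_atTop_iff_infinite.mpr hJ
  obtain ⟨k0, _, hk0⟩ := hJ.nonempty
  have hC0ne : C0.Nonempty := hk0 ▸ (hC.1 k0).2
  have hC0fin : C0.Finite := hF.subset hC0F
  have hpos : (0:ℝ) < C0.ncard := by exact_mod_cast (Set.ncard_pos hC0fin).mpr hC0ne
  have hg : ∀ g : Γ, π g '' C0 = C0 := by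
    intro g
    set r := ((symmDiff C0 (π g '' C0)).ncard : ℝ) / C0.ncard with hr
    have hr0 : r ≤ 0 := by
      by_contra h
      push_neg at h
      have hev : ∀ᶠ n in atTop,
          ((symmDiff (C n) (π g '' C n)).ncard : ℝ) / (C n).ncard < r :=
        (hC.2 g).eventually (eventually_lt_nhds h)
      obtain ⟨n, hn, hlt⟩ := (hfreq.and_eventually hev).exists
      rw [hn.2] at hlt
      exact lt_irrefl _ hlt
    have hr1 : 0 ≤ r := div_nonneg (Nat.cast_nonneg _) (Nat.cast_nonneg _)
    have hr2 : r = 0 := le_antisymm hr0 hr1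
    have hnum : ((symmDiff C0 (π g '' C0)).ncard : ℝ) = 0 := by
      have := div_eq_zero_iff.mp hr2
      rcases this with h | h
      · exact h
      · exact absurd h hpos.ne'
    have hsdfin : (symmDiff C0 (π g '' C0)).Finite :=
      (hC0fin.union (hC0fin.image _)).subset symmDiff_subset_union
    have : (symmDiff C0 (π g '' C0)) = ∅ := by
      rw [← Set.ncard_eq_zero hsdfin]
      exact_mod_cast hnum
    have hbot : symmDiff C0 (π g '' C0) = ⊥ := this
    exact (symmDiff_eq_bot.mp hbot).symm
  obtain ⟨x, hx⟩ := hC0ne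
  have horb : {y | ∃ g : Γ, π g x = y} ⊆ C0 := by
    rintro y ⟨g, rfl⟩
    rw [← hg g]
    exact ⟨x, hx, rfl⟩
  exact (hinf x) (hC0fin.subset horb)

private lemma exists_large_folner {Γ Y : Type*} [Group Γ] (π : Γ →* Equiv.Perm Y)
    (hinf : HasInfiniteOrbits π) {C : ℕ → Set Y} (hC : IsFolnerSeq π C)
    (S : Finset Γ) (N : ℕ) :
    ∀ ε : ℝ, 0 < ε → ∃ D : Set Y, D.Finite ∧ D.Nonempty ∧ N ≤ D.ncard ∧
      ∀ s ∈ S, ((symmDiff D (π s '' D)).ncard : ℝ) ≤ ε * D.ncard := by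
  have hEv : ∀ δ : ℝ, 0 < δ → ∃ K : ℕ, ∀ k, K ≤ k →
      ∀ s ∈ S, ((symmDiff (C k) (π s '' C k)).ncard : ℝ) ≤ δ * (C k).ncard := by
    intro δ hδ
    have h1 : ∀ᶠ k in atTop, ∀ s ∈ S,
        ((symmDiff (C k) (π s '' C k)).ncard : ℝ) ≤ δ * (C k).ncard := by
      rw [eventually_all_finset]
      intro s _
      have h2 : ∀ᶠ k in atTop,
          ((symmDiff (C k) (π s '' C k)).ncard : ℝ) / (C k).ncard ≤ δ :=
        (hC.2 s).eventually (eventually_le_nhds hδ)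
      filter_upwards [h2] with k hk
      have hpos : (0:ℝ) < (C k).ncard := by
        exact_mod_cast (Set.ncard_pos (hC.1 k).1).mpr (hC.1 k).2
      calc ((symmDiff (C k) (π s '' C k)).ncard : ℝ)
          = ((symmDiff (C k) (π s '' C k)).ncard : ℝ) / (C k).ncard * (C k).ncard := by
            field_simp
        _ ≤ δ * (C k).ncard := mul_le_mul_of_nonneg_right hk hpos.le
    exact eventually_atTop.mp h1
  induction N with
  | zero =>
    intro ε hε
    obtain ⟨K, hK⟩ := hEv ε hε
    exact ⟨C K, (hC.1 K).1, (hC.1 K).2, Nat.zero_le _, hK K le_rfl⟩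
  | succ N ih =>
    intro ε hε
    obtain ⟨F, hFfin, hFne, hFcard, hFfol⟩ := ih (ε/2) (half_pos hε)
    obtain ⟨K, hK⟩ := hEv (ε/2) (half_pos hε)
    by_cases hcase : ∀ k, K ≤ k → C k ⊆ F
    · exact (folner_no_trapped π hinf hC hFfin K hcase).elim
    · push_neg at hcase
      obtain ⟨k, hKk, hnot⟩ := hcase
      obtain ⟨x, hxCk, hxF⟩ := Set.not_subset.mp hnot
      have hCkfin := (hC.1 k).1
      have hDfin : (F ∪ C k).Finite := hFfin.union hCkfin
      refine ⟨F ∪ C k, hDfin, hFne.mono Set.subset_union_left, ?_, ?_⟩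
      · have h1 : insert x F ⊆ F ∪ C k :=
          Set.insert_subset (Or.inr hxCk) Set.subset_union_left
        calc N + 1 ≤ F.ncard + 1 := by omega
          _ = (insert x F).ncard := (Set.ncard_insert_of_notMem hxF hFfin).symm
          _ ≤ (F ∪ C k).ncard := Set.ncard_le_ncard h1 hDfin
      · intro s hs
        have himg : π s '' (F ∪ C k) = π s '' F ∪ π s '' C k := Set.image_union _ _ _
        have hsub2 : symmDiff (F ∪ C k) (π s '' (F ∪ C k)) ⊆
            symmDiff F (π s '' F) ∪ symmDiff (C k) (π s '' C k) := by
          rw [himg]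
          intro y hy
          simp only [Set.mem_symmDiff, Set.mem_union] at *
          tauto
        have hsd1 : (symmDiff F (π s '' F)).Finite :=
          (hFfin.union (hFfin.image _)).subset symmDiff_subset_union
        have hsd2 : (symmDiff (C k) (π s '' C k)).Finite :=
          (hCkfin.union (hCkfin.image _)).subset symmDiff_subset_union
        have hFle : (F.ncard : ℝ) ≤ (F ∪ C k).ncard := by
          exact_mod_cast Set.ncard_le_ncard Set.subset_union_left hDfin
        have hCkle : ((C k).ncard : ℝ) ≤ (F ∪ C k).ncard := by
          exact_mod_cast Set.ncard_le_ncard Set.subset_union_right hDfin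
        calc ((symmDiff (F ∪ C k) (π s '' (F ∪ C k))).ncard : ℝ)
            ≤ ((symmDiff F (π s '' F) ∪ symmDiff (C k) (π s '' C k)).ncard : ℝ) := by
              exact_mod_cast Set.ncard_le_ncard hsub2 (hsd1.union hsd2)
          _ ≤ ((symmDiff F (π s '' F)).ncard : ℝ) + ((symmDiff (C k) (π s '' C k)).ncard : ℝ) := by
              exact_mod_cast Set.ncard_union_le _ _
          _ ≤ ε/2 * F.ncard + ε/2 * (C k).ncard := add_le_add (hFfol s hs) (hK k hKk s hs)
          _ ≤ ε/2 * (F ∪ C k).ncard + ε/2 * (F ∪ C k).ncard := by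
              have := half_pos hε
              gcongr
          _ = ε * (F ∪ C k).ncard := by ring

private def TT {Y : Type*} (m : ℕ) (A : Set Y) :
    Set {v : Fin m → Y // ∀ i j, i ≠ j → v i ≠ v j} := {v | ∀ i, v.1 i ∈ A}

noncomputable def ttEquiv {Y : Type*} (m : ℕ) (A : Set Y) :
    ↥(TT m A) ≃ (Fin m ↪ ↥A) where
  toFun v := ⟨fun i => ⟨v.1.1 i, v.2 i⟩, fun i j hij => by
    by_contra hne
    exact (v.1.2 i j hne) (congrArg Subtype.val hij)⟩
  invFun f := ⟨⟨fun i => (f i).1, fun i j hij heq => hij (f.injective (Subtype.ext heq))⟩,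
    fun i => (f i).2⟩
  left_inv v := rfl
  right_inv f := by ext i; rfl

lemma finite_TT {Y : Type*} (m : ℕ) {A : Set Y} (hA : A.Finite) : (TT m A).Finite := by
  haveI : Fintype ↥A := hA.fintype
  haveI : Finite (Fin m ↪ ↥A) :=
    Finite.of_injective (fun f => (f : Fin m → ↥A)) DFunLike.coe_injective
  haveI : Finite ↥(TT m A) := Finite.of_equiv _ (ttEquiv m A).symm
  exact Set.finite_coe_iff.mp inferInstance

lemma ncard_TT {Y : Type*} (m : ℕ) {A : Set Y} (hA : A.Finite) :
    (TT m A).ncard = A.ncard.descFactorial m := by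
  classical
  haveI : Fintype ↥A := hA.fintype
  haveI : Finite (Fin m ↪ ↥A) :=
    Finite.of_injective (fun f => (f : Fin m → ↥A)) DFunLike.coe_injective
  haveI : Fintype (Fin m ↪ ↥A) := Fintype.ofFinite _
  calc (TT m A).ncard = Nat.card ↥(TT m A) := (Nat.card_coe_set_eq _).symm
    _ = Nat.card (Fin m ↪ ↥A) := Nat.card_congr (ttEquiv m A)
    _ = Fintype.card (Fin m ↪ ↥A) := Nat.card_eq_fintype_card
    _ = (Fintype.card ↥A).descFactorial (Fintype.card (Fin m)) := Fintype.card_embedding_eq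
    _ = A.ncard.descFactorial m := by
        rw [Fintype.card_fin, Set.ncard_eq_toFinset_card', Set.toFinset_card]

lemma image_TT {Γ Y : Type*} [Group Γ] (π : Γ →* Equiv.Perm Y) (m : ℕ) (g : Γ) (A : Set Y) :
    (diagHom π m g) '' TT m A = TT m (π g '' A) := by
  ext w
  constructor
  · rintro ⟨v, hv, rfl⟩ i
    exact ⟨v.1 i, hv i, rfl⟩
  · intro hw
    refine ⟨(diagHom π m g⁻¹) w, fun i => ?_, ?_⟩
    · obtain ⟨a, ha, hai⟩ := hw i
      have h1 : ((diagHom π m g⁻¹) w).1 i = π g⁻¹ (w.1 i) := rfl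
      rw [h1, ← hai, map_inv]
      simpa using ha
    · calc (diagHom π m g) ((diagHom π m g⁻¹) w)
          = ((diagHom π m g) * (diagHom π m g⁻¹)) w := rfl
        _ = (diagHom π m (g * g⁻¹)) w := by rw [map_mul]
        _ = w := by rw [mul_inv_cancel, map_one, Equiv.Perm.one_apply]

lemma symmDiff_TT_ncard_le {Y : Type*} (m' : ℕ) (A B : Set Y)
    (hA : A.Finite) (hB : B.Finite) :
    (symmDiff (TT (m'+1) A) (TT (m'+1) B)).ncard ≤
      (m'+1) * ((symmDiff A B).ncard * (A ∪ B).ncard ^ m') := by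
  classical
  set m := m' + 1 with hm
  set W := symmDiff (TT m A) (TT m B) with hW
  have hmem : ∀ v ∈ W, (∀ i, v.1 i ∈ A ∪ B) ∧ ∃ i, v.1 i ∈ symmDiff A B := by
    intro v hv
    rw [hW, Set.mem_symmDiff] at hv
    rcases hv with ⟨hA', hB'⟩ | ⟨hB', hA'⟩
    · refine ⟨fun i => Or.inl (hA' i), ?_⟩
      rcases not_forall.mp hB' with ⟨i, hi⟩
      exact ⟨i, Set.mem_symmDiff.mpr (Or.inl ⟨hA' i, hi⟩)⟩
    · refine ⟨fun i => Or.inr (hB' i), ?_⟩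
      rcases not_forall.mp hA' with ⟨i, hi⟩
      exact ⟨i, Set.mem_symmDiff.mpr (Or.inr ⟨hB' i, hi⟩)⟩
  haveI : Finite ↥(symmDiff A B) :=
    (((hA.union hB).subset symmDiff_subset_union)).to_subtype
  haveI : Finite ↥(A ∪ B) := (hA.union hB).to_subtype
  let idx : ↥W → Fin m := fun v => Classical.choose (hmem v.1 v.2).2
  have hidx : ∀ v : ↥W, v.1.1 (idx v) ∈ symmDiff A B :=
    fun v => Classical.choose_spec (hmem v.1 v.2).2
  let Φ : ↥W → Fin m × ↥(symmDiff A B) × (Fin m' → ↥(A ∪ B)) := fun v =>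
    ⟨idx v, ⟨v.1.1 (idx v), hidx v⟩,
      fun j => ⟨v.1.1 ((idx v).succAbove j), (hmem v.1 v.2).1 _⟩⟩
  have hinj : Function.Injective Φ := by
    intro v w h
    have h1 : idx v = idx w := congrArg Prod.fst h
    have h2 : v.1.1 (idx v) = w.1.1 (idx w) :=
      congrArg (fun p => (p.2.1 : Y)) h
    have h3 : ∀ j, v.1.1 ((idx v).succAbove j) = w.1.1 ((idx w).succAbove j) :=
      fun j => congrArg (fun p => (p.2.2 j : Y)) h
    apply Subtype.ext
    apply Subtype.ext
    funext j
    rcases eq_or_ne j (idx v) with rfl | hj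
    · rw [h2, ← h1]
    · obtain ⟨k, hk⟩ := Fin.exists_succAbove_eq hj
      rw [← hk, h3 k, ← h1]
  calc W.ncard = Nat.card ↥W := (Nat.card_coe_set_eq _).symm
    _ ≤ Nat.card (Fin m × ↥(symmDiff A B) × (Fin m' → ↥(A ∪ B))) :=
        Nat.card_le_card_of_injective Φ hinj
    _ = m * ((symmDiff A B).ncard * (A ∪ B).ncard ^ m') := by
        have e1 : Nat.card (Fin m) = m := by simp
        have e2 : Nat.card (Fin m') = m' := by simp
        rw [Nat.card_prod, Nat.card_prod, Nat.card_fun, e1, e2,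
          Nat.card_coe_set_eq, Nat.card_coe_set_eq]

/-- **Lemma 2.2.** If `Γ` acts amenably with infinite orbits on a countable set `Y` then
the diagonal action of `Γ` on the complement of the large diagonal in `Y^m` is amenable
(`m ≥ 1`). -/
theorem amenable_diagonal_action_off_diagonal
    {Γ Y : Type*} [Group Γ] [Countable Γ] [Countable Y]
    (π : Γ →* Equiv.Perm Y) (m : ℕ) (hm : 1 ≤ m)
    (hamen : IsAmenableAction π) (hinf : HasInfiniteOrbits π) :
    IsAmenableAction (diagHom π m) := by
  classical
  obtain ⟨m', rfl⟩ : ∃ m', m = m' + 1 := ⟨m - 1, by omega⟩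
  obtain ⟨C, hC⟩ := hamen
  obtain ⟨f, hf⟩ := exists_surjective_nat Γ
  have hD : ∀ n : ℕ, ∃ D : Set Y, D.Finite ∧ D.Nonempty ∧ 2*(m'+1) + n ≤ D.ncard ∧
      ∀ j, j ≤ n → ((symmDiff D (π (f j) '' D)).ncard : ℝ) ≤ ((n:ℝ)+1)⁻¹ * D.ncard := by
    intro n
    have hpos : (0:ℝ) < ((n:ℝ)+1)⁻¹ := by positivity
    obtain ⟨D, h1, h2, h3, h4⟩ := exists_large_folner π hinf hC
      ((Finset.range (n+1)).image f) (2*(m'+1)+n) _ hpos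
    exact ⟨D, h1, h2, h3, fun j hj =>
      h4 (f j) (Finset.mem_image.mpr ⟨j, Finset.mem_range.mpr (Nat.lt_succ_of_le hj), rfl⟩)⟩
  choose D hDfin hDne hDcard hDfol using hD
  refine ⟨fun n => TT (m'+1) (D n), ⟨fun n => ⟨finite_TT _ (hDfin n), ?_⟩, ?_⟩⟩
  · have hcard : (TT (m'+1) (D n)).ncard = (D n).ncard.descFactorial (m'+1) :=
      ncard_TT _ (hDfin n)
    have hpos : 0 < (TT (m'+1) (D n)).ncard := by
      rw [hcard]
      apply Nat.pos_of_ne_zero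
      intro h
      have h1 := Nat.descFactorial_eq_zero_iff_lt.mp h
      have h2 := hDcard n
      omega
    exact (Set.ncard_pos (finite_TT _ (hDfin n))).mp hpos
  · intro g
    obtain ⟨j, rfl⟩ := hf g
    set CST : ℝ := ((m':ℝ)+1) * 2^m' * 2^(m'+1) with hCST
    have hbnd : Tendsto (fun n : ℕ => CST * (1/((n:ℝ)+1))) atTop (nhds 0) := by
      have h0 : Tendsto (fun n : ℕ => 1/((n:ℝ)+1)) atTop (nhds 0) :=
        tendsto_one_div_add_atTop_nhds_zero_nat
      simpa using h0.const_mul CST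
    refine squeeze_zero' (Eventually.of_forall fun n =>
      div_nonneg (Nat.cast_nonneg _) (Nat.cast_nonneg _)) ?_ hbnd
    filter_upwards [eventually_ge_atTop j] with n hn
    set A := D n with hA
    set B := π (f j) '' A with hB
    have hAfin := hDfin n
    have hBfin : B.Finite := hAfin.image _
    have ha : (2*(m'+1) : ℕ) ≤ A.ncard := le_trans (by omega) (hDcard n)
    have hEcard : (TT (m'+1) A).ncard = A.ncard.descFactorial (m'+1) := ncard_TT _ hAfin
    have hdpos : 0 < A.ncard.descFactorial (m'+1) := by
      apply Nat.pos_of_ne_zero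
      intro h
      have := Nat.descFactorial_eq_zero_iff_lt.mp h
      omega
    have hkey : A.ncard ^ (m'+1) ≤ 2^(m'+1) * A.ncard.descFactorial (m'+1) := by
      calc A.ncard ^ (m'+1) ≤ (2 * (A.ncard + 1 - (m'+1)))^(m'+1) :=
            Nat.pow_le_pow_left (by omega) _
        _ = 2^(m'+1) * (A.ncard + 1 - (m'+1))^(m'+1) := by rw [Nat.mul_pow]
        _ ≤ 2^(m'+1) * A.ncard.descFactorial (m'+1) :=
            Nat.mul_le_mul_left _ (Nat.pow_sub_le_descFactorial _ _)
    have himg : (diagHom π (m'+1) (f j)) '' (TT (m'+1) A) = TT (m'+1) B :=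
      image_TT π _ _ _
    have hnum : (symmDiff (TT (m'+1) A) ((diagHom π (m'+1) (f j)) '' (TT (m'+1) A))).ncard ≤
        (m'+1) * ((symmDiff A B).ncard * (A ∪ B).ncard ^ m') := by
      rw [himg]
      exact symmDiff_TT_ncard_le m' A B hAfin hBfin
    have hu : (A ∪ B).ncard ≤ 2 * A.ncard := by
      have h1 := Set.ncard_union_le A B
      have h2 : B.ncard = A.ncard := Set.ncard_image_of_injective _ (π (f j)).injective
      omega
    have hs : ((symmDiff A B).ncard : ℝ) ≤ ((n:ℝ)+1)⁻¹ * A.ncard := hDfol n j hn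
    -- real abbreviations
    have hdpos' : (0:ℝ) < (A.ncard.descFactorial (m'+1) : ℝ) := by exact_mod_cast hdpos
    rw [hEcard, div_le_iff₀ hdpos']
    have hra : (0:ℝ) ≤ (A.ncard : ℝ) := Nat.cast_nonneg _
    have hrs : (0:ℝ) ≤ ((symmDiff A B).ncard : ℝ) := Nat.cast_nonneg _
    have hru : (0:ℝ) ≤ ((A ∪ B).ncard : ℝ) := Nat.cast_nonneg _
    have hru2 : ((A ∪ B).ncard : ℝ) ≤ 2 * (A.ncard : ℝ) := by exact_mod_cast hu
    have hkey' : ((A.ncard : ℝ)) ^ (m'+1) ≤ 2^(m'+1) * (A.ncard.descFactorial (m'+1) : ℝ) := by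
      exact_mod_cast hkey
    have hrn : (0:ℝ) < (n:ℝ)+1 := by positivity
    calc ((symmDiff (TT (m'+1) A) ((diagHom π (m'+1) (f j)) '' (TT (m'+1) A))).ncard : ℝ)
        ≤ ((m'+1) * ((symmDiff A B).ncard * (A ∪ B).ncard ^ m') : ℕ) := by exact_mod_cast hnum
      _ = ((m':ℝ)+1) * (((symmDiff A B).ncard : ℝ) * ((A ∪ B).ncard : ℝ) ^ m') := by
          push_cast; ring
      _ ≤ ((m':ℝ)+1) * (((symmDiff A B).ncard : ℝ) * (2 * (A.ncard : ℝ)) ^ m') := by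
          gcongr
      _ ≤ ((m':ℝ)+1) * ((((n:ℝ)+1)⁻¹ * (A.ncard : ℝ)) * (2 * (A.ncard : ℝ)) ^ m') := by
          gcongr
      _ = (((m':ℝ)+1) * 2^m' / ((n:ℝ)+1)) * ((A.ncard : ℝ))^(m'+1) := by
          rw [mul_pow]
          field_simp
          ring
      _ ≤ (((m':ℝ)+1) * 2^m' / ((n:ℝ)+1)) * (2^(m'+1) * (A.ncard.descFactorial (m'+1) : ℝ)) := by
          gcongr
      _ = CST * (1/((n:ℝ)+1)) * (A.ncard.descFactorial (m'+1) : ℝ) := by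
          rw [hCST]
          field_simp
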